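/- Let C₁,…,C_n be matrices with Σᵢ Cᵢ* Cᵢ = 1. Then for positive definite matrices A₁,…,A_n, (Σᵢ Cᵢ* Aᵢ Cᵢ)⁻¹ ≤ Σᵢ Cᵢ* Aᵢ⁻¹ Cᵢ, provided Σᵢ Cᵢ* Aᵢ Cᵢ is invertible. -/

import Mathlib

open Matrix
open scoped ComplexOrder Classical

/-- Square root of a positive semidefinite matrix, extended by `0`. -/
noncomputable def msqrt {n : Type*} [Fintype n] [DecidableEq n] (A : Matrix n n ℂ) :
    Matrix n n ℂ :=
  if h : A.PosSemidef then
    (h.1.eigenvectorUnitary : Matrix n n ℂ) * diagonal ((↑) ∘ (√·) ∘ h.1.eigenvalues) *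
      (star h.1.eigenvectorUnitary : Matrix n n ℂ) else 0

/-- Real power of a Hermitian matrix via the functional calculus, extended by `0`. -/
noncomputable def mrpow {n : Type*} [Fintype n] [DecidableEq n] (A : Matrix n n ℂ) (α : ℝ) :
    Matrix n n ℂ :=
  if h : A.IsHermitian then h.cfc (fun t => t ^ α) else 0

/-- A completely positive linear map between matrix algebras (Choi–Kraus form). -/
def IsCPMap {n m : Type*} [Fintype n] [Fintype m] (Φ : Matrix n n ℂ → Matrix m m ℂ) : Prop :=
  ∃ (r : ℕ) (C : Fin r → Matrix n m ℂ), ∀ X, Φ X = ∑ i, (C i)ᴴ * X * C i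

/-- The matrix geometric mean `A^{1/2} (A^{-1/2} B A^{-1/2})^{1/2} A^{1/2}`. -/
noncomputable def geomMean {n : Type*} [Fintype n] [DecidableEq n] (A B : Matrix n n ℂ) :
    Matrix n n ℂ :=
  msqrt A * msqrt ((msqrt A)⁻¹ * B * (msqrt A)⁻¹) * msqrt A

/-- The weighted geometric mean `B^{1/2} (B^{-1/2} A B^{-1/2})^α B^{1/2}`. -/
noncomputable def wgeomMean {n : Type*} [Fintype n] [DecidableEq n] (α : ℝ)
    (A B : Matrix n n ℂ) : Matrix n n ℂ :=
  msqrt B * mrpow ((msqrt B)⁻¹ * A * (msqrt B)⁻¹) α * msqrt B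

/-- The harmonic mean `2 (A⁻¹ + B⁻¹)⁻¹`. -/
noncomputable def harmMean {n : Type*} [Fintype n] [DecidableEq n] (A B : Matrix n n ℂ) :
    Matrix n n ℂ :=
  (2 : ℂ) • (A⁻¹ + B⁻¹)⁻¹

lemma posDef_of_posSemidef_isUnit {n : Type*} [Fintype n] [DecidableEq n]
    {S : Matrix n n ℂ} (hS : S.PosSemidef) (hu : IsUnit S) : S.PosDef := by
  exact hS.posDef_iff_isUnit.mpr hu


set_option maxHeartbeats 1000000 in
/-- Jensen's operator inequality for the inverse function. -/
theorem jensen_inv {m k : Type*} [Fintype m] [DecidableEq m] [Fintype k] [DecidableEq k]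
    (N : ℕ) (C : Fin N → Matrix m k ℂ) (A : Fin N → Matrix m m ℂ)
    (hA : ∀ i, (A i).PosDef)
    (hC : ∑ i, (C i)ᴴ * C i = 1)
    (hinv : IsUnit (∑ i, (C i)ᴴ * A i * C i)) :
    ((∑ i, (C i)ᴴ * (A i)⁻¹ * C i) - (∑ i, (C i)ᴴ * A i * C i)⁻¹).PosSemidef := by
  set S := ∑ i, (C i)ᴴ * A i * C i with hSdef
  set T := ∑ i, (C i)ᴴ * (A i)⁻¹ * C i with hTdef
  have hS_psd : S.PosSemidef := by
    rw [hSdef]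
    apply Finset.sum_induction _ Matrix.PosSemidef (fun a b ha hb => ha.add hb)
      Matrix.PosSemidef.zero
    exact fun i _ => (hA i).posSemidef.conjTranspose_mul_mul_same (C i)
  have hS_pd : S.PosDef := posDef_of_posSemidef_isUnit hS_psd hinv
  haveI : Invertible S := hS_pd.isUnit.invertible
  have hMi : ∀ i : Fin N,
      (Matrix.fromBlocks (A i) 1 1 (A i)⁻¹ : Matrix (m ⊕ m) (m ⊕ m) ℂ).PosSemidef := by
    intro i
    haveI : Invertible (A i) := (hA i).isUnit.invertible
    have h1 := (Matrix.PosDef.fromBlocks₁₁ (1 : Matrix m m ℂ) (A i)⁻¹ (hA i)).mpr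
    rw [conjTranspose_one] at h1
    apply h1
    simp only [Matrix.one_mul, Matrix.mul_one, sub_self]
    exact Matrix.PosSemidef.zero
  have key : (Matrix.fromBlocks S 1 1 T : Matrix (k ⊕ k) (k ⊕ k) ℂ).PosSemidef := by
    have heq : (∑ i, (Matrix.fromBlocks (C i) 0 0 (C i) : Matrix (m ⊕ m) (k ⊕ k) ℂ)ᴴ *
          Matrix.fromBlocks (A i) 1 1 (A i)⁻¹ * Matrix.fromBlocks (C i) 0 0 (C i)) =
        (Matrix.fromBlocks S 1 1 T : Matrix (k ⊕ k) (k ⊕ k) ℂ) := by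
      have h2 : ∀ i : Fin N, (Matrix.fromBlocks (C i) 0 0 (C i) : Matrix (m ⊕ m) (k ⊕ k) ℂ)ᴴ *
          Matrix.fromBlocks (A i) 1 1 (A i)⁻¹ * Matrix.fromBlocks (C i) 0 0 (C i) =
          Matrix.fromBlocks ((C i)ᴴ * A i * C i) ((C i)ᴴ * C i)
            ((C i)ᴴ * C i) ((C i)ᴴ * (A i)⁻¹ * C i) := by
        intro i
        simp [Matrix.fromBlocks_conjTranspose, Matrix.fromBlocks_multiply, Matrix.mul_assoc]
      simp only [h2]
      ext (i | i) (j | j) <;>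
        simp [Matrix.sum_apply, hSdef, hTdef, ← hC]
    rw [← heq]
    apply Finset.sum_induction _ Matrix.PosSemidef (fun a b ha hb => ha.add hb)
      Matrix.PosSemidef.zero
    exact fun i _ => (hMi i).conjTranspose_mul_mul_same _
  have h3 := (Matrix.PosDef.fromBlocks₁₁ (1 : Matrix k k ℂ) T hS_pd).mp
  rw [conjTranspose_one] at h3
  simpa using h3 key
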